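/- There exist real numbers 0 = a < b, a function f : ℝ → ℝ that is continuously differentiable (namely a cubic polynomial), and α* ∈ (0,1), such that D^α_{*a} f(t) ≥ 0 for all t ∈ [a,b] and all α ∈ (0, α*], but f is not monotone on [a,b]. Hence a constant sign of the Caputo derivatives for all orders α in a subinterval (0, α*] of (0,1) does not imply monotonicity. -/

import Mathlib

/-- The Caputo fractional derivative of order `α` with starting point `a`:
`D^α_{*a} f(t) = (1/Γ(1-α)) ∫_a^t (t-s)^(-α) f'(s) ds`. -/
noncomputable def caputoDeriv (a α : ℝ) (f : ℝ → ℝ) (t : ℝ) : ℝ :=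
  (Real.Gamma (1 - α))⁻¹ * ∫ s in a..t, (t - s) ^ (-α) * deriv f s

lemma aux_rpow_integral (r t : ℝ) (hr : -1 < r) (ht : 0 ≤ t) :
    ∫ s in (0:ℝ)..t, (t - s) ^ r = t ^ (r + 1) / (r + 1) := by
  rw [intervalIntegral.integral_comp_sub_left (fun x => x ^ r) t, sub_self, sub_zero,
    integral_rpow (Or.inl hr), Real.zero_rpow (by linarith)]
  ring

theorem exists_caputo_nonneg_not_monotone :
    ∃ (b : ℝ) (f : ℝ → ℝ) (αstar : ℝ),
      0 < b ∧ ContDiff ℝ 1 f ∧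
      (∃ c₀ c₁ c₂ c₃ : ℝ, c₃ ≠ 0 ∧
        ∀ t, f t = c₃ * t ^ 3 + c₂ * t ^ 2 + c₁ * t + c₀) ∧
      αstar ∈ Set.Ioo (0 : ℝ) 1 ∧
      (∀ t ∈ Set.Icc (0 : ℝ) b, ∀ α ∈ Set.Ioc (0 : ℝ) αstar,
        0 ≤ caputoDeriv 0 α f t) ∧
      ¬ (MonotoneOn f (Set.Icc (0 : ℝ) b) ∨ AntitoneOn f (Set.Icc (0 : ℝ) b)) := by
  set f : ℝ → ℝ := fun t => t ^ 3 - 3/2 * t ^ 2 + 3/5 * t with hf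
  have hderiv : ∀ s : ℝ, deriv f s = 3 * s ^ 2 - 3 * s + 3/5 := by
    intro s
    have h : HasDerivAt f (3 * s ^ 2 - 3 * s + 3/5) s := by
      have h1 := ((hasDerivAt_pow 3 s).sub ((hasDerivAt_pow 2 s).const_mul (3/2 : ℝ))).add
        ((hasDerivAt_id s).const_mul (3/5 : ℝ))
      have e : (3 * s ^ 2 - 3 * s + 3/5 : ℝ)
          = ((3:ℕ):ℝ) * s ^ (3 - 1) - 3/2 * (((2:ℕ):ℝ) * s ^ (2 - 1)) + 3/5 * 1 := by
        push_cast
        ring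
      rw [e]
      exact h1
    exact h.deriv
  refine ⟨1, f, 1/3, one_pos, ?_, ⟨0, 3/5, -(3/2), 1, one_ne_zero, fun t => by simp [hf]; ring⟩,
    ⟨by norm_num, by norm_num⟩, ?_, ?_⟩
  · exact ((contDiff_id.pow 3).sub (contDiff_const.mul (contDiff_id.pow 2))).add
      (contDiff_const.mul contDiff_id)
  · rintro t ⟨ht0, ht1⟩ α ⟨hα0, hα3⟩
    have hα1 : α < 1 := by linarith
    unfold caputoDeriv
    have hΓ : 0 < Real.Gamma (1 - α) := Real.Gamma_pos_of_pos (by linarith)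
    refine mul_nonneg (inv_nonneg.2 hΓ.le) ?_
    -- rewrite deriv
    simp only [hderiv]
    have hcong : Set.EqOn (fun s => (t - s) ^ (-α) * (3 * s ^ 2 - 3 * s + 3/5))
        (fun s => 3 * (t - s) ^ (2 - α) + (3 - 6 * t) * (t - s) ^ (1 - α)
          + (3 * t ^ 2 - 3 * t + 3/5) * (t - s) ^ (-α)) (Set.uIcc 0 t) := by
      intro s hs
      rw [Set.uIcc_of_le ht0] at hs
      rcases eq_or_lt_of_le hs.2 with h | h
      · rw [h]
        simp only [sub_self]
        rw [Real.zero_rpow (by linarith), Real.zero_rpow (by linarith),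
          Real.zero_rpow (by linarith)]
        ring
      · have hx : 0 < t - s := sub_pos.2 h
        have e2 : (t - s) ^ (2 - α) = (t - s) ^ (2 : ℕ) * (t - s) ^ (-α) := by
          rw [show (2 : ℝ) - α = ((2 : ℕ) : ℝ) + -α by push_cast; ring, Real.rpow_add hx,
            Real.rpow_natCast]
        have e1 : (t - s) ^ (1 - α) = (t - s) * (t - s) ^ (-α) := by
          rw [show (1 : ℝ) - α = ((1 : ℕ) : ℝ) + -α by push_cast; ring, Real.rpow_add hx,
            Real.rpow_natCast, pow_one]
        simp only []
        rw [e2, e1]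
        ring
    rw [intervalIntegral.integral_congr hcong]
    have I2 : IntervalIntegrable (fun s => (t - s) ^ (2 - α)) MeasureTheory.volume 0 t := by
      have := (intervalIntegral.intervalIntegrable_rpow' (r := 2 - α) (by linarith)
        (a := t - 0) (b := t - t)).comp_sub_left t
      simpa using this
    have I1 : IntervalIntegrable (fun s => (t - s) ^ (1 - α)) MeasureTheory.volume 0 t := by
      have := (intervalIntegral.intervalIntegrable_rpow' (r := 1 - α) (by linarith)
        (a := t - 0) (b := t - t)).comp_sub_left t
      simpa using this
    have I0 : IntervalIntegrable (fun s => (t - s) ^ (-α)) MeasureTheory.volume 0 t := by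
      have := (intervalIntegral.intervalIntegrable_rpow' (r := -α) (by linarith)
        (a := t - 0) (b := t - t)).comp_sub_left t
      simpa using this
    rw [intervalIntegral.integral_add ((I2.const_mul 3).add (I1.const_mul (3 - 6 * t)))
        (I0.const_mul _),
      intervalIntegral.integral_add (I2.const_mul 3) (I1.const_mul _),
      intervalIntegral.integral_const_mul, intervalIntegral.integral_const_mul,
      intervalIntegral.integral_const_mul,
      aux_rpow_integral _ _ (by linarith) ht0,
      aux_rpow_integral _ _ (by linarith) ht0,
      aux_rpow_integral _ _ (by linarith) ht0]
    rcases eq_or_lt_of_le ht0 with h | ht'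
    · rw [← h]
      rw [Real.zero_rpow (by linarith), Real.zero_rpow (by linarith),
        Real.zero_rpow (by linarith)]
      norm_num
    · rw [show (2 : ℝ) - α + 1 = 3 - α by ring, show (1 : ℝ) - α + 1 = 2 - α by ring,
        show -α + 1 = 1 - α by ring]
      have e3 : t ^ (3 - α) = t ^ (1 - α) * t ^ (2 : ℕ) := by
        rw [show (3 : ℝ) - α = (1 - α) + ((2 : ℕ) : ℝ) by push_cast; ring, Real.rpow_add ht',
          Real.rpow_natCast]
      have e2 : t ^ (2 - α) = t ^ (1 - α) * t := by
        rw [show (2 : ℝ) - α = (1 - α) + ((1 : ℕ) : ℝ) by push_cast; ring, Real.rpow_add ht',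
          Real.rpow_natCast, pow_one]
      rw [e3, e2]
      have hP : 0 ≤ 6 * t ^ 2 - 3 * (3 - α) * t + 3/5 * (2 - α) * (3 - α) := by
        nlinarith [sq_nonneg (4 * t - (3 - α)), mul_nonneg (by linarith : (0:ℝ) ≤ 3 - α)
          (by linarith : (0:ℝ) ≤ 1 - 3 * α)]
      have hd1 : (0:ℝ) < 1 - α := by linarith
      have hd2 : (0:ℝ) < 2 - α := by linarith
      have hd3 : (0:ℝ) < 3 - α := by linarith
      have m1 : (1 : ℝ) - α ≠ 0 := ne_of_gt hd1
      have m2 : (2 : ℝ) - α ≠ 0 := ne_of_gt hd2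
      have m3 : (3 : ℝ) - α ≠ 0 := ne_of_gt hd3
      have key : 3 * (t ^ ((1:ℝ) - α) * t ^ (2 : ℕ) / (3 - α))
          + (3 - 6 * t) * (t ^ ((1:ℝ) - α) * t / (2 - α))
          + (3 * t ^ 2 - 3 * t + 3/5) * (t ^ ((1:ℝ) - α) / (1 - α))
          = t ^ ((1:ℝ) - α) * ((6 * t ^ 2 - 3 * (3 - α) * t + 3/5 * (2 - α) * (3 - α))
            / ((1 - α) * (2 - α) * (3 - α))) := by
        field_simp
        ring
      rw [key]
      exact mul_nonneg (Real.rpow_nonneg ht0 _)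
        (div_nonneg hP (by positivity))
  · rintro (hmono | hanti)
    · have h := hmono (show (1/2:ℝ) ∈ Set.Icc (0:ℝ) 1 by norm_num)
        (show (3/5:ℝ) ∈ Set.Icc (0:ℝ) 1 by norm_num) (by norm_num)
      simp only [hf] at h
      norm_num at h
    · have h := hanti (show (0:ℝ) ∈ Set.Icc (0:ℝ) 1 by norm_num)
        (show (1/2:ℝ) ∈ Set.Icc (0:ℝ) 1 by norm_num) (by norm_num)
      simp only [hf] at h
      norm_num at h
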